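/- Suppose a Fink–Mao region word w of length n ends with the suffix C, X, Y, C where {X, Y} = {L, R}. Then for every even d ≥ 2 there exists a Fink–Mao region word of length n + d whose reduced form (under the reductions of the Reduction Lemma) equals the reduced form of w; such a word is obtained by inserting an alternating L/R block of length d immediately before the final four-letter suffix of w. -/

import Mathlib

/-- A region of the tie diagram: left, right, or center. -/
inductive Region : Type
  | L | R | C
deriving DecidableEq

open Region

/-- A Fink–Mao region word: a list of letters from {L, R, C} with consecutive
letters distinct, first letter `L`, ending with the suffix `L,R,C` or `R,L,C`. -/
def FMWord (w : List Region) : Prop :=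
  w.Chain' (· ≠ ·) ∧ w.head? = some L ∧
    ([L, R, C] <:+ w ∨ [R, L, C] <:+ w)

/-- Swap `L` and `R` (fixing `C`). -/
def other : Region → Region
  | L => R
  | R => L
  | C => C

/-- `altWord s n` is the alternating word of length `n` starting with letter `s`. -/
def altWord : Region → ℕ → List Region
  | _, 0 => []
  | s, n + 1 => s :: altWord (other s) n

/-- One step of the reductions 0–IV of the Reduction Lemma, on region words. -/
inductive Red : List Region → List Region → Prop
  | red0 : Red [L, R, C] []
  | red1 (w : List Region) (X Y t : Region) :
      ((X = L ∧ Y = R) ∨ (X = R ∧ Y = L)) → (t = L ∨ t = R) →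
      Red (w ++ [X, Y, X, C]) (w ++ [X, C, t])
  | red2 (w : List Region) (X Y : Region) :
      ((X = L ∧ Y = R) ∨ (X = R ∧ Y = L)) → Red (w ++ [C, X, Y, C]) w
  | red3 (s : Region) (n : ℕ) : (s = L ∨ s = R) → Red (altWord s (n + 1)) []
  | red4 (w : List Region) (s : Region) (n : ℕ) :
      (s = L ∨ s = R) → Red (w ++ [C] ++ altWord s (n + 2)) (w ++ [C, s])

lemma other_other (s : Region) : other (other s) = s := by cases s <;> rfl

lemma other_invol : Function.Involutive other := other_other

lemma other_mem {s : Region} (h : s = L ∨ s = R) : other s = L ∨ other s = R := by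
  rcases h with rfl | rfl <;> simp [other]

lemma other_ne {s : Region} (h : s = L ∨ s = R) : other s ≠ s := by
  rcases h with rfl | rfl <;> simp [other]

lemma iter_other_mem (n : ℕ) {s : Region} (h : s = L ∨ s = R) :
    other^[n] s = L ∨ other^[n] s = R := by
  induction n with
  | zero => simpa
  | succ k ih => rw [Function.iterate_succ_apply']; exact other_mem ih

lemma eq_other_of_ne {a x : Region} (ha : a ≠ C) (hx : x = L ∨ x = R) (hax : a ≠ x) :
    a = other x := by
  rcases hx with rfl | rfl <;> cases a <;> simp_all [other]

lemma altWord_length (s : Region) (n : ℕ) : (altWord s n).length = n := by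
  induction n generalizing s with
  | zero => rfl
  | succ k ih => simp [altWord, ih]

lemma altWord_append (m n : ℕ) (s : Region) :
    altWord s (m + n) = altWord s m ++ altWord (other^[m] s) n := by
  induction m generalizing s with
  | zero => simp [altWord]
  | succ k ih =>
      have : k + 1 + n = (k + n) + 1 := by omega
      rw [this]
      simp only [altWord, ih (other s), Function.iterate_succ_apply, List.cons_append]

lemma altWord_head? (s : Region) (n : ℕ) : (altWord s (n + 1)).head? = some s := rfl

lemma altWord_getLast? (n : ℕ) (s : Region) :
    (altWord s (n + 1)).getLast? = some (other^[n] s) := by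
  induction n generalizing s with
  | zero => rfl
  | succ k ih =>
      show (s :: altWord (other s) (k + 1)).getLast? = _
      rw [show altWord (other s) (k+1) = other s :: altWord (other (other s)) k from rfl,
        List.getLast?_cons_cons,
        show other s :: altWord (other (other s)) k = altWord (other s) (k+1) from rfl,
        ih (other s), Function.iterate_succ_apply]

lemma chain'_altWord {s : Region} (h : s = L ∨ s = R) (n : ℕ) :
    (altWord s n).Chain' (· ≠ ·) := by
  induction n generalizing s with
  | zero => simp [altWord, List.Chain']
  | succ k ih =>
      rw [altWord, List.Chain', List.isChain_cons]
      refine ⟨?_, ih (other_mem h)⟩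
      intro y hy
      cases k with
      | zero => simp [altWord] at hy
      | succ m =>
          rw [altWord_head?] at hy
          cases hy
          exact (other_ne h).symm

lemma decomp : ∀ v : List Region, v ≠ [] → v.Chain' (· ≠ ·) → v.head? = some L →
    (∃ k, v = altWord L (k + 1)) ∨ (∃ p, v = p ++ [C]) ∨
      (∃ p t k, (t = L ∨ t = R) ∧ v = p ++ [C] ++ altWord t (k + 1)) := by
  intro v
  induction v using List.reverseRecOn with
  | nil => intro h; exact absurd rfl h
  | append_singleton v' a ih =>
      intro _ hc hh
      rcases eq_or_ne v' [] with rfl | hv'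
      · simp at hh
        subst hh
        exact Or.inl ⟨0, rfl⟩
      · have hcv' : v'.Chain' (· ≠ ·) := (List.isChain_append.mp hc).1
        have hhv' : v'.head? = some L := by
          rw [List.head?_append] at hh
          cases v' with
          | nil => exact absurd rfl hv'
          | cons b t => simpa using hh
        have hjunc : ∀ x ∈ v'.getLast?, x ≠ a := by
          have := (List.isChain_append.mp hc).2.2
          intro x hx; exact this x hx a rfl
        rcases eq_or_ne a C with rfl | haC
        · exact Or.inr (Or.inl ⟨v', rfl⟩)
        rcases ih hv' hcv' hhv' with ⟨k, rfl⟩ | ⟨p, rfl⟩ | ⟨p, t, k, ht, rfl⟩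
        · left
          refine ⟨k + 1, ?_⟩
          have hl : (altWord L (k + 1)).getLast? = some (other^[k] L) := altWord_getLast? k L
          have hne : other^[k] L ≠ a := hjunc _ hl
          have ha : a = other (other^[k] L) :=
            eq_other_of_ne haC (iter_other_mem k (Or.inl rfl)) (Ne.symm hne)
          rw [altWord_append (k + 1) 1 L]
          simp [altWord, ha, Function.iterate_succ_apply']
        · right; right
          exact ⟨p, a, 0, by cases a <;> simp_all [altWord], by simp [altWord]⟩
        · right; right
          refine ⟨p, t, k + 1, ht, ?_⟩
          have hl : (p ++ [C] ++ altWord t (k + 1)).getLast? = some (other^[k] t) := by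
            rw [List.getLast?_append, altWord_getLast?]; rfl
          have hne : other^[k] t ≠ a := hjunc _ hl
          have ha : a = other (other^[k] t) :=
            eq_other_of_ne haC (iter_other_mem k ht) (Ne.symm hne)
          rw [List.append_assoc, List.append_assoc, ← List.append_assoc [C],
            altWord_append (k + 1) 1 t]
          simp [altWord, ha, Function.iterate_succ_apply']

/-- If a Fink–Mao region word of length `n` ends with the suffix `C,X,Y,C` where
`{X,Y} = {L,R}`, then for every even `d ≥ 2` there is a Fink–Mao region word of
length `n + d`, obtained by inserting an alternating L/R block of length `d` just
before the final four-letter suffix, whose reduced form agrees with that of the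
original word (both words reduce to a common word). -/
theorem lengthen_tie_sequence (v : List Region) (X Y : Region) (n : ℕ)
    (hw : FMWord (v ++ [C, X, Y, C])) (hn : (v ++ [C, X, Y, C]).length = n)
    (hXY : (X = L ∧ Y = R) ∨ (X = R ∧ Y = L)) :
    ∀ d : ℕ, 2 ≤ d → Even d →
      ∃ s : Region, (s = L ∨ s = R) ∧
        FMWord (v ++ altWord s d ++ [C, X, Y, C]) ∧
        (v ++ altWord s d ++ [C, X, Y, C]).length = n + d ∧
        ∃ z : List Region,
          Relation.ReflTransGen Red (v ++ [C, X, Y, C]) z ∧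
          Relation.ReflTransGen Red (v ++ altWord s d ++ [C, X, Y, C]) z := by
  intro d hd2 hde
  obtain ⟨hc, hh, _⟩ := hw
  have hvne : v ≠ [] := by rintro rfl; simp [List.head?] at hh
  have hcv : v.Chain' (· ≠ ·) := (List.isChain_append.mp hc).1
  have hjC : ∀ x ∈ v.getLast?, x ≠ C := by
    have h2 := (List.isChain_append.mp hc).2.2
    intro x hx; exact h2 x hx C rfl
  have hhv : v.head? = some L := by
    rw [List.head?_append] at hh
    cases v with
    | nil => exact absurd rfl hvne
    | cons b u => simpa using hh
  have hCXYC : ([C, X, Y, C] : List Region).Chain' (· ≠ ·) := by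
    rcases hXY with ⟨rfl, rfl⟩ | ⟨rfl, rfl⟩ <;> simp [List.Chain', List.isChain_cons_cons]
  obtain ⟨e, rfl⟩ := hde
  obtain ⟨m, rfl⟩ : ∃ m, e = m + 1 := ⟨e - 1, by omega⟩
  rw [show m + 1 + (m + 1) = 2 * m + 2 from by ring]
  have hhead : ∀ b : List Region, (v ++ b ++ [C, X, Y, C]).head? = some L := by
    intro b
    cases v with
    | nil => exact absurd rfl hvne
    | cons a u => simpa using hhv
  have hsuf : ∀ b : List Region,
      [L, R, C] <:+ v ++ b ++ [C, X, Y, C] ∨ [R, L, C] <:+ v ++ b ++ [C, X, Y, C] := by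
    intro b
    rcases hXY with ⟨rfl, rfl⟩ | ⟨rfl, rfl⟩
    · exact Or.inl ⟨v ++ b ++ [C], by simp⟩
    · exact Or.inr ⟨v ++ b ++ [C], by simp⟩
  have hlen : ∀ s : Region,
      (v ++ altWord s (2 * m + 2) ++ [C, X, Y, C]).length = n + (2 * m + 2) := by
    intro s
    simp only [List.length_append, altWord_length] at hn ⊢
    omega
  rcases decomp v hvne hcv hhv with ⟨k, hv⟩ | ⟨p, hv⟩ | ⟨p, t, k, ht, hv⟩
  · -- v is an alternating word starting with L
    subst hv
    have key : altWord L (k + 1) ++ altWord (other^[k + 1] L) (2 * m + 2)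
        = altWord L (k + 1 + (2 * m + 2)) := (altWord_append (k + 1) (2 * m + 2) L).symm
    refine ⟨other^[k + 1] L, iter_other_mem _ (Or.inl rfl), ⟨?_, hhead _, hsuf _⟩, hlen _,
      [], ?_, ?_⟩
    · rw [key]
      refine List.isChain_append.mpr ⟨chain'_altWord (Or.inl rfl) _, hCXYC, ?_⟩
      intro x hx y hy
      rw [show k + 1 + (2 * m + 2) = (k + 2 * m + 2) + 1 from by ring,
        altWord_getLast?] at hx
      cases hx
      simp only [List.head?] at hy
      cases hy
      rcases iter_other_mem (k + 2 * m + 2) (Or.inl (rfl : L = L)) with h | h <;>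
        simp [h]
    · exact Relation.ReflTransGen.head (Red.red2 _ X Y hXY)
        (Relation.ReflTransGen.single (Red.red3 L k (Or.inl rfl)))
    · refine Relation.ReflTransGen.head (Red.red2 _ X Y hXY) ?_
      rw [key, show k + 1 + (2 * m + 2) = (k + 2 * m + 2) + 1 from by ring]
      exact Relation.ReflTransGen.single (Red.red3 L _ (Or.inl rfl))
  · -- v ends with C: impossible
    exact absurd rfl (hjC C (by rw [hv]; simp))
  · -- v = p ++ [C] ++ alternating block
    subst hv
    have key : p ++ [C] ++ altWord t (k + 1) ++ altWord (other^[k + 1] t) (2 * m + 2)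
        = p ++ [C] ++ altWord t (k + 1 + (2 * m + 2)) := by
      rw [List.append_assoc (p ++ [C]), ← altWord_append]
    have hCt : (C : Region) ≠ t := by rcases ht with rfl | rfl <;> simp
    refine ⟨other^[k + 1] t, iter_other_mem _ ht, ⟨?_, hhead _, hsuf _⟩, hlen _,
      p ++ [C, t], ?_, ?_⟩
    · rw [key]
      refine List.isChain_append.mpr ⟨?_, hCXYC, ?_⟩
      · refine List.isChain_append.mpr ⟨(List.isChain_append.mp hcv).1,
          chain'_altWord ht _, ?_⟩
        intro x hx y hy
        rw [List.getLast?_append] at hx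
        cases hx
        rw [show k + 1 + (2 * m + 2) = (k + 2 * m + 2) + 1 from by ring,
          altWord_head?] at hy
        cases hy
        exact hCt
      · intro x hx y hy
        rw [List.getLast?_append, List.getLast?_append,
          show k + 1 + (2 * m + 2) = (k + 2 * m + 2) + 1 from by ring,
          altWord_getLast?] at hx
        cases hx
        simp only [List.head?] at hy
        cases hy
        rcases iter_other_mem (k + 2 * m + 2) ht with h | h <;> simp [h]
    · refine Relation.ReflTransGen.head (Red.red2 _ X Y hXY) ?_
      cases k with
      | zero =>
          rw [show p ++ [C] ++ altWord t 1 = p ++ [C, t] from by simp [altWord]]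
      | succ k' =>
          exact Relation.ReflTransGen.single (Red.red4 p t k' ht)
    · refine Relation.ReflTransGen.head (Red.red2 _ X Y hXY) ?_
      rw [key, show k + 1 + (2 * m + 2) = (k + 2 * m + 1) + 2 from by ring]
      exact Relation.ReflTransGen.single (Red.red4 p t (k + 2 * m + 1) ht)
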